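/- Let V be a (G_Γ, β, γ0)-vertex algebra and M a (G_Γ, β, γ0)-left V-module as in the context, and assume β satisfies β(γ1, γ2)·β(γ1, γ3) = β(γ1, γ2+γ3) for all γ1, γ2, γ3 ∈ Γ. Then for all γ1, γ2 ∈ Γ, u ∈ V_{γ1}, v ∈ V_{γ2}, w ∈ M: (i) Y^M_0(u, Y^M_{−1}(v, w)) − Y^M_{−1}(Y_0(u, v), w) − β(γ1, γ2)·Y^M_{−1}(v, Y^M_0(u, w)) ∈ C₂(M); (ii) Y^M_0(Y_{−1}(u, v), w) − Y^M_{−1}(u, Y^M_0(v, w)) − β(γ1, γ2)·Y^M_{−1}(v, Y^M_0(u, w)) ∈ C₂(M). Consequently R(M) = M/C₂(M), with action induced by Y^M_{−1} and bracket induced by Y^M_0, is a (G_Γ, β)-left Poisson module for the β-commutative (G_Γ, β)-Poisson algebra R(V) = V/C₂(V) of degree 0. -/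

import Mathlib

/-- The generalized binomial coefficient `binom(a, i) = a(a-1)⋯(a-i+1)/i!`
for `a : ℤ`, `i : ℕ`; it is an integer. -/
def zbinom (a : ℤ) (i : ℕ) : ℤ :=
  if 0 ≤ a then (a.toNat.choose i : ℤ)
  else (-1 : ℤ) ^ i * ((((i : ℤ) - a - 1).toNat).choose i : ℤ)

/-- A `(G_Γ, β, γ0)`-vertex algebra in component form, *without* the
derivation axiom (which is to be derived): a `Γ`-graded `k`-vector space `V`
(internal direct sum of the subspaces `Vg γ`), bilinear products
`Y n : V → V → V` of degree `n • γ0`, and a vacuum vector `vac ∈ V_0`,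
satisfying truncation, vacuum, creation and the `β`-Jacobi identity. -/
structure PreVA (k : Type*) [Field k] (Γ : Type*) [AddCommGroup Γ] [DecidableEq Γ]
    (γ0 : Γ) (β : Γ → Γ → k)
    (V : Type*) [AddCommGroup V] [Module k V] where
  Vg : Γ → Submodule k V
  internal : DirectSum.IsInternal Vg
  Y : ℤ → V →ₗ[k] V →ₗ[k] V
  vac : V
  vac_mem : vac ∈ Vg 0
  grading : ∀ (n : ℤ) (γ1 γ2 : Γ) (u v : V), u ∈ Vg γ1 → v ∈ Vg γ2 →
      Y n u v ∈ Vg (γ1 + γ2 + n • γ0)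
  truncation : ∀ u v : V, ∃ N : ℤ, ∀ n : ℤ, N ≤ n → Y n u v = 0
  vacuum_left : ∀ v : V, Y (-1) vac v = v
  vacuum_left' : ∀ n : ℤ, n ≠ -1 → ∀ v : V, Y n vac v = 0
  creation : ∀ v : V, Y (-1) v vac = v
  creation' : ∀ n : ℤ, 0 ≤ n → ∀ v : V, Y n v vac = 0
  jacobi : ∀ (l m n : ℤ) (γ1 γ2 : Γ) (u v w : V), u ∈ Vg γ1 → v ∈ Vg γ2 →
      (∑ᶠ i : ℕ, (((-1 : k) ^ i * (zbinom l i : k)) •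
          Y (m + l - (i : ℤ)) u (Y (n + (i : ℤ)) v w)))
        - ((-1 : k) ^ l * β γ1 γ2) •
            (∑ᶠ i : ℕ, (((-1 : k) ^ i * (zbinom l i : k)) •
              Y (n + l - (i : ℤ)) v (Y (m + (i : ℤ)) u w)))
        = ∑ᶠ i : ℕ, ((zbinom m i : k) •
            Y (m + n - (i : ℤ)) (Y (l + (i : ℤ)) u v) w)


/-- A `(G_Γ, β, γ0)`-vertex algebra in component form: a `PreVA` together
with the derivation properties of `D(v) = Y_{-2}(v, 𝟙)`, namely
`D(Y_n(u,v)) - Y_n(u, D v) = -n • Y_{n-1}(u,v)` and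
`Y_n(D u, v) = -n • Y_{n-1}(u,v)`. -/
structure VA (k : Type*) [Field k] (Γ : Type*) [AddCommGroup Γ] [DecidableEq Γ]
    (γ0 : Γ) (β : Γ → Γ → k)
    (V : Type*) [AddCommGroup V] [Module k V]
    extends PreVA k Γ γ0 β V where
  deriv1 : ∀ (n : ℤ) (u v : V),
      Y (-2) (Y n u v) vac - Y n u (Y (-2) v vac) = (-n) • Y (n - 1) u v
  deriv2 : ∀ (n : ℤ) (u v : V),
      Y n (Y (-2) u vac) v = (-n) • Y (n - 1) u v

/-- The subspace `C₂(V) = span_k { Y_{-2}(u, v) : u, v ∈ V }`. -/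
def C2 {k Γ V : Type*} [Field k] [AddCommGroup Γ] [DecidableEq Γ]
    [AddCommGroup V] [Module k V] {γ0 : Γ} {β : Γ → Γ → k}
    (A : VA k Γ γ0 β V) : Submodule k V :=
  Submodule.span k {x : V | ∃ u v : V, A.Y (-2) u v = x}

/-- The data of a `(G_Γ, β, γ0)`-left module over a vertex algebra `A`,
*without* the derivation axiom: a `Γ`-graded `k`-vector space `M` with
bilinear action maps `YM n : V → M → M` of degree `n • γ0`, satisfying the
vacuum, truncation and `β`-Jacobi axioms. -/
structure PreVMod {k Γ V : Type*} [Field k] [AddCommGroup Γ] [DecidableEq Γ]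
    [AddCommGroup V] [Module k V] {γ0 : Γ} {β : Γ → Γ → k}
    (A : VA k Γ γ0 β V)
    (M : Type*) [AddCommGroup M] [Module k M] where
  Mg : Γ → Submodule k M
  internal : DirectSum.IsInternal Mg
  YM : ℤ → V →ₗ[k] M →ₗ[k] M
  grading : ∀ (n : ℤ) (γ δ : Γ) (v : V) (w : M), v ∈ A.Vg γ → w ∈ Mg δ →
      YM n v w ∈ Mg (γ + δ + n • γ0)
  vacuum : ∀ w : M, YM (-1) A.vac w = w
  vacuum' : ∀ n : ℤ, n ≠ -1 → ∀ w : M, YM n A.vac w = 0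
  truncation : ∀ (v : V) (w : M), ∃ N : ℤ, ∀ n : ℤ, N ≤ n → YM n v w = 0
  jacobi : ∀ (l m n : ℤ) (γ1 γ2 : Γ) (u v : V) (w : M),
      u ∈ A.Vg γ1 → v ∈ A.Vg γ2 →
      (∑ᶠ i : ℕ, (((-1 : k) ^ i * (zbinom l i : k)) •
          YM (m + l - (i : ℤ)) u (YM (n + (i : ℤ)) v w)))
        - ((-1 : k) ^ l * β γ1 γ2) •
            (∑ᶠ i : ℕ, (((-1 : k) ^ i * (zbinom l i : k)) •
              YM (n + l - (i : ℤ)) v (YM (m + (i : ℤ)) u w)))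
        = ∑ᶠ i : ℕ, ((zbinom m i : k) •
            YM (m + n - (i : ℤ)) (A.Y (l + (i : ℤ)) u v) w)

/-- A `(G_Γ, β, γ0)`-left module over the vertex algebra `A`: a `PreVMod`
together with the derivation axioms: there is a `k`-linear `D^M : M → M` with
`D^M(Y^M_n(v,w)) - Y^M_n(v, D^M w) = -n • Y^M_{n-1}(v,w)` and
`Y^M_n(D v, w) = -n • Y^M_{n-1}(v,w)` where `D(v) = Y_{-2}(v, 𝟙)`. -/
structure VMod {k Γ V : Type*} [Field k] [AddCommGroup Γ] [DecidableEq Γ]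
    [AddCommGroup V] [Module k V] {γ0 : Γ} {β : Γ → Γ → k}
    (A : VA k Γ γ0 β V)
    (M : Type*) [AddCommGroup M] [Module k M]
    extends PreVMod A M where
  DM : M →ₗ[k] M
  derivM1 : ∀ (n : ℤ) (v : V) (w : M),
      DM (YM n v w) - YM n v (DM w) = (-n) • YM (n - 1) v w
  derivM2 : ∀ (n : ℤ) (v : V) (w : M),
      YM n (A.Y (-2) v A.vac) w = (-n) • YM (n - 1) v w

/-- The subspace `C₂(M) = span_k { Y^M_{-2}(v, w) : v ∈ V, w ∈ M }`. -/
def C2M {k Γ V : Type*} [Field k] [AddCommGroup Γ] [DecidableEq Γ]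
    [AddCommGroup V] [Module k V] {γ0 : Γ} {β : Γ → Γ → k}
    {A : VA k Γ γ0 β V} {M : Type*} [AddCommGroup M] [Module k M]
    (B : VMod A M) : Submodule k M :=
  Submodule.span k {x : M | ∃ (v : V) (w : M), B.YM (-2) v w = x}


section Aux

set_option linter.unusedSectionVars false

open Function

lemma zbinom_at_zero (l : ℤ) : zbinom l 0 = 1 := by
  unfold zbinom; split <;> simp

lemma zbinom_zero_succ (j : ℕ) : zbinom 0 (j + 1) = 0 := by
  simp [zbinom]

lemma supp_of_bound {X : Type*} [Zero X] (f : ℕ → X) (N : ℕ)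
    (h : ∀ i, N ≤ i → f i = 0) : (Function.support f).Finite := by
  apply Set.Finite.subset (Set.finite_Iio N)
  intro i hi
  by_contra hc
  simp only [Set.mem_Iio, not_lt] at hc
  exact hi (h i hc)

variable {k Γ V M : Type*} [Field k] [CharZero k] [AddCommGroup Γ]
    [DecidableEq Γ] [AddCommGroup V] [Module k V] [AddCommGroup M] [Module k M]
    {γ0 : Γ} {β : Γ → Γ → k} {A : VA k Γ γ0 β V} (B : VMod A M)

/-- `Y^M_n(v,w) ∈ C₂(M)` for `n ≤ -2`, in quotient form. -/
lemma negQ : ∀ n : ℤ, n ≤ -2 → ∀ (v : V) (w : M),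
    (Submodule.Quotient.mk (B.YM n v w) : M ⧸ C2M B) = 0 := by
  have key : ∀ (j : ℕ) (v : V) (w : M),
      (Submodule.Quotient.mk (B.YM (-2 - (j : ℤ)) v w) : M ⧸ C2M B) = 0 := by
    intro j
    induction j with
    | zero =>
      intro v w
      rw [Submodule.Quotient.mk_eq_zero]
      exact Submodule.subset_span ⟨v, w, by norm_num⟩
    | succ j ih =>
      intro v w
      have hd := B.derivM2 (-2 - (j : ℤ)) v w
      have h0 := ih (A.Y (-2) v A.vac) w
      rw [hd, show (-(-2 - (j : ℤ))) = ((j : ℤ) + 2) by ring,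
        ← Int.cast_smul_eq_zsmul k, Submodule.Quotient.mk_smul] at h0
      rcases smul_eq_zero.mp h0 with h | h
      · have : ((j : ℤ) + 2) = 0 := by exact_mod_cast h
        omega
      · rw [show (-2 - ((j + 1 : ℕ) : ℤ)) = (-2 - (j : ℤ) - 1) by push_cast; ring]
        exact h
  intro n hn v w
  rw [show n = -2 - ((-2 - n).toNat : ℤ) by omega]
  exact key _ v w

lemma suppL (c : ℕ → k) (a b : ℤ) (u : V) (v : V) (w : M) :
    (Function.support fun i : ℕ =>
      c i • B.YM (a - (i : ℤ)) u (B.YM (b + (i : ℤ)) v w)).Finite := by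
  obtain ⟨N, hN⟩ := B.truncation v w
  apply supp_of_bound _ (N - b).toNat
  intro i hi
  rw [hN _ (by omega), map_zero, smul_zero]

lemma suppR (c : ℕ → k) (a b : ℤ) (u v : V) (w : M) :
    (Function.support fun i : ℕ =>
      c i • B.YM (a - (i : ℤ)) (A.Y (b + (i : ℤ)) u v) w).Finite := by
  obtain ⟨N, hN⟩ := A.truncation u v
  apply supp_of_bound _ (N - b).toNat
  intro i hi
  rw [hN _ (by omega), map_zero, LinearMap.zero_apply, smul_zero]

lemma mkQ_finsum (f : ℕ → M) (hf : (Function.support f).Finite) :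
    (C2M B).mkQ (∑ᶠ i, f i) = ∑ᶠ i, (C2M B).mkQ (f i) := by
  simpa using ((C2M B).mkQ.toAddMonoidHom).map_finsum hf

/-- The β-Jacobi identity pushed down to the quotient `M ⧸ C₂(M)`. -/
lemma jacQ (l m n : ℤ) (γ1 γ2 : Γ) (u v : V) (w : M)
    (hu : u ∈ A.Vg γ1) (hv : v ∈ A.Vg γ2) :
    (∑ᶠ i : ℕ, (((-1 : k) ^ i * (zbinom l i : k)) •
        (Submodule.Quotient.mk (B.YM (m + l - (i : ℤ)) u (B.YM (n + (i : ℤ)) v w)) : M ⧸ C2M B)))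
      - ((-1 : k) ^ l * β γ1 γ2) •
          (∑ᶠ i : ℕ, (((-1 : k) ^ i * (zbinom l i : k)) •
            (Submodule.Quotient.mk (B.YM (n + l - (i : ℤ)) v (B.YM (m + (i : ℤ)) u w)) : M ⧸ C2M B)))
      = ∑ᶠ i : ℕ, ((zbinom m i : k) •
          (Submodule.Quotient.mk (B.YM (m + n - (i : ℤ)) (A.Y (l + (i : ℤ)) u v) w) : M ⧸ C2M B)) := by
  have hJ := congrArg (C2M B).mkQ (B.jacobi l m n γ1 γ2 u v w hu hv)
  rw [map_sub, map_smul,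
    mkQ_finsum B _ (suppL B _ (m + l) n u v w),
    mkQ_finsum B _ (suppL B _ (n + l) m v u w),
    mkQ_finsum B _ (suppR B _ (m + n) l u v w)] at hJ
  simpa only [map_smul, Submodule.mkQ_apply] using hJ

/-- Collapsed Jacobi identity with `l = m = 0`. -/
lemma qJ00 (n : ℤ) (γ1 γ2 : Γ) (u v : V) (w : M)
    (hu : u ∈ A.Vg γ1) (hv : v ∈ A.Vg γ2) :
    (Submodule.Quotient.mk (B.YM 0 u (B.YM n v w)) : M ⧸ C2M B)
      - β γ1 γ2 • Submodule.Quotient.mk (B.YM n v (B.YM 0 u w))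
    = Submodule.Quotient.mk (B.YM n (A.Y 0 u v) w) := by
  have hJ := jacQ B 0 0 n γ1 γ2 u v w hu hv
  rw [finsum_eq_single
      (fun i : ℕ => (((-1 : k) ^ i * (zbinom 0 i : k)) •
        (Submodule.Quotient.mk (B.YM (0 + 0 - (i : ℤ)) u (B.YM (n + (i : ℤ)) v w)) : M ⧸ C2M B)))
      0 (fun i hi => by
        obtain ⟨j, rfl⟩ := Nat.exists_eq_succ_of_ne_zero hi
        simp [Nat.succ_eq_add_one, zbinom_zero_succ]),
    finsum_eq_single
      (fun i : ℕ => (((-1 : k) ^ i * (zbinom 0 i : k)) •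
        (Submodule.Quotient.mk (B.YM (n + 0 - (i : ℤ)) v (B.YM (0 + (i : ℤ)) u w)) : M ⧸ C2M B)))
      0 (fun i hi => by
        obtain ⟨j, rfl⟩ := Nat.exists_eq_succ_of_ne_zero hi
        simp [Nat.succ_eq_add_one, zbinom_zero_succ]),
    finsum_eq_single
      (fun i : ℕ => ((zbinom 0 i : k) •
        (Submodule.Quotient.mk (B.YM (0 + n - (i : ℤ)) (A.Y (0 + (i : ℤ)) u v) w) : M ⧸ C2M B)))
      0 (fun i hi => by
        obtain ⟨j, rfl⟩ := Nat.exists_eq_succ_of_ne_zero hi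
        simp [Nat.succ_eq_add_one, zbinom_zero_succ])] at hJ
  simpa [zbinom_at_zero] using hJ

/-- homogeneous version of `Y^M_m(u, Y^M_{-2}(v,w)) ∈ C₂(M)` for `m ≤ 0`. -/
lemma qEhom (m : ℤ) (hm : m ≤ 0) (γ1 γ2 : Γ) (u v : V) (w : M)
    (hu : u ∈ A.Vg γ1) (hv : v ∈ A.Vg γ2) :
    (Submodule.Quotient.mk (B.YM m u (B.YM (-2) v w)) : M ⧸ C2M B) = 0 := by
  have hJ := jacQ B 0 m (-2) γ1 γ2 u v w hu hv
  rw [finsum_eq_single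
      (fun i : ℕ => (((-1 : k) ^ i * (zbinom 0 i : k)) •
        (Submodule.Quotient.mk (B.YM (m + 0 - (i : ℤ)) u (B.YM (-2 + (i : ℤ)) v w)) : M ⧸ C2M B)))
      0 (fun i hi => by
        obtain ⟨j, rfl⟩ := Nat.exists_eq_succ_of_ne_zero hi
        simp [Nat.succ_eq_add_one, zbinom_zero_succ]),
    finsum_eq_zero_of_forall_eq_zero
      (f := fun i : ℕ => (((-1 : k) ^ i * (zbinom 0 i : k)) •
        (Submodule.Quotient.mk (B.YM (-2 + 0 - (i : ℤ)) v (B.YM (m + (i : ℤ)) u w)) : M ⧸ C2M B)))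
      (fun i => by beta_reduce; rw [negQ B (-2 + 0 - (i : ℤ)) (by omega), smul_zero]),
    finsum_eq_zero_of_forall_eq_zero
      (f := fun i : ℕ => ((zbinom m i : k) •
        (Submodule.Quotient.mk (B.YM (m + -2 - (i : ℤ)) (A.Y (0 + (i : ℤ)) u v) w) : M ⧸ C2M B)))
      (fun i => by beta_reduce; rw [negQ B (m + -2 - (i : ℤ)) (by omega), smul_zero])] at hJ
  simpa [zbinom_at_zero] using hJ

/-- homogeneous version of `Y^M_n(Y_{-2}(u,v), w) ∈ C₂(M)` for `n ≤ 0`. -/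
lemma qFhom (n : ℤ) (hn : n ≤ 0) (γ1 γ2 : Γ) (u v : V) (w : M)
    (hu : u ∈ A.Vg γ1) (hv : v ∈ A.Vg γ2) :
    (Submodule.Quotient.mk (B.YM n (A.Y (-2) u v) w) : M ⧸ C2M B) = 0 := by
  have hJ := jacQ B (-2) 0 n γ1 γ2 u v w hu hv
  rw [finsum_eq_zero_of_forall_eq_zero
      (f := fun i : ℕ => (((-1 : k) ^ i * (zbinom (-2) i : k)) •
        (Submodule.Quotient.mk (B.YM (0 + -2 - (i : ℤ)) u (B.YM (n + (i : ℤ)) v w)) : M ⧸ C2M B)))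
      (fun i => by beta_reduce; rw [negQ B (0 + -2 - (i : ℤ)) (by omega), smul_zero]),
    finsum_eq_zero_of_forall_eq_zero
      (f := fun i : ℕ => (((-1 : k) ^ i * (zbinom (-2) i : k)) •
        (Submodule.Quotient.mk (B.YM (n + -2 - (i : ℤ)) v (B.YM (0 + (i : ℤ)) u w)) : M ⧸ C2M B)))
      (fun i => by beta_reduce; rw [negQ B (n + -2 - (i : ℤ)) (by omega), smul_zero]),
    finsum_eq_single
      (fun i : ℕ => ((zbinom 0 i : k) •
        (Submodule.Quotient.mk (B.YM (0 + n - (i : ℤ)) (A.Y (-2 + (i : ℤ)) u v) w) : M ⧸ C2M B)))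
      0 (fun i hi => by
        obtain ⟨j, rfl⟩ := Nat.exists_eq_succ_of_ne_zero hi
        simp [Nat.succ_eq_add_one, zbinom_zero_succ])] at hJ
  rw [zbinom_at_zero] at hJ
  have := hJ.symm
  simpa using this

/-- homogeneous skew-associativity: `l = -1, m = 0, n = 0`. -/
lemma qChom (γ1 γ2 : Γ) (u v : V) (w : M)
    (hu : u ∈ A.Vg γ1) (hv : v ∈ A.Vg γ2) :
    (Submodule.Quotient.mk (B.YM (-1) u (B.YM 0 v w)) : M ⧸ C2M B)
      + β γ1 γ2 • Submodule.Quotient.mk (B.YM (-1) v (B.YM 0 u w))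
    = Submodule.Quotient.mk (B.YM 0 (A.Y (-1) u v) w) := by
  have hJ := jacQ B (-1) 0 0 γ1 γ2 u v w hu hv
  rw [finsum_eq_single
      (fun i : ℕ => (((-1 : k) ^ i * (zbinom (-1) i : k)) •
        (Submodule.Quotient.mk (B.YM (0 + -1 - (i : ℤ)) u (B.YM (0 + (i : ℤ)) v w)) : M ⧸ C2M B)))
      0 (fun i hi => by
        have h1 : 1 ≤ i := Nat.one_le_iff_ne_zero.mpr hi
        beta_reduce
        rw [negQ B (0 + -1 - (i : ℤ)) (by omega), smul_zero]),
    finsum_eq_single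
      (fun i : ℕ => (((-1 : k) ^ i * (zbinom (-1) i : k)) •
        (Submodule.Quotient.mk (B.YM (0 + -1 - (i : ℤ)) v (B.YM (0 + (i : ℤ)) u w)) : M ⧸ C2M B)))
      0 (fun i hi => by
        have h1 : 1 ≤ i := Nat.one_le_iff_ne_zero.mpr hi
        beta_reduce
        rw [negQ B (0 + -1 - (i : ℤ)) (by omega), smul_zero]),
    finsum_eq_single
      (fun i : ℕ => ((zbinom 0 i : k) •
        (Submodule.Quotient.mk (B.YM (0 + 0 - (i : ℤ)) (A.Y (-1 + (i : ℤ)) u v) w) : M ⧸ C2M B)))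
      0 (fun i hi => by
        obtain ⟨j, rfl⟩ := Nat.exists_eq_succ_of_ne_zero hi
        simp [Nat.succ_eq_add_one, zbinom_zero_succ])] at hJ
  rw [zbinom_at_zero] at hJ
  have hz : ((-1 : k) ^ (-1 : ℤ)) = -1 := by
    rw [zpow_neg, zpow_one, inv_neg, inv_one]
  rw [hz] at hJ
  simpa [zbinom_at_zero, sub_neg_eq_add, neg_smul] using hJ

/-- homogeneous associativity mod `C₂(M)`: `l = -1, m = 0, n = -1`. -/
lemma qDhom (γ1 γ2 : Γ) (u v : V) (w : M)
    (hu : u ∈ A.Vg γ1) (hv : v ∈ A.Vg γ2) :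
    (Submodule.Quotient.mk (B.YM (-1) u (B.YM (-1) v w)) : M ⧸ C2M B)
    = Submodule.Quotient.mk (B.YM (-1) (A.Y (-1) u v) w) := by
  have hJ := jacQ B (-1) 0 (-1) γ1 γ2 u v w hu hv
  rw [finsum_eq_single
      (fun i : ℕ => (((-1 : k) ^ i * (zbinom (-1) i : k)) •
        (Submodule.Quotient.mk (B.YM (0 + -1 - (i : ℤ)) u (B.YM (-1 + (i : ℤ)) v w)) : M ⧸ C2M B)))
      0 (fun i hi => by
        have h1 : 1 ≤ i := Nat.one_le_iff_ne_zero.mpr hi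
        beta_reduce
        rw [negQ B (0 + -1 - (i : ℤ)) (by omega), smul_zero]),
    finsum_eq_zero_of_forall_eq_zero
      (f := fun i : ℕ => (((-1 : k) ^ i * (zbinom (-1) i : k)) •
        (Submodule.Quotient.mk (B.YM (-1 + -1 - (i : ℤ)) v (B.YM (0 + (i : ℤ)) u w)) : M ⧸ C2M B)))
      (fun i => by beta_reduce; rw [negQ B (-1 + -1 - (i : ℤ)) (by omega), smul_zero]),
    finsum_eq_single
      (fun i : ℕ => ((zbinom 0 i : k) •
        (Submodule.Quotient.mk (B.YM (0 + -1 - (i : ℤ)) (A.Y (-1 + (i : ℤ)) u v) w) : M ⧸ C2M B)))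
      0 (fun i hi => by
        obtain ⟨j, rfl⟩ := Nat.exists_eq_succ_of_ne_zero hi
        simp [Nat.succ_eq_add_one, zbinom_zero_succ])] at hJ
  simpa [zbinom_at_zero] using hJ

lemma homog_ext {X : Type*} [AddCommGroup X] [Module k X] (f : V →ₗ[k] X)
    (h : ∀ γ : Γ, ∀ u ∈ A.Vg γ, f u = 0) : ∀ u, f u = 0 := by
  intro u
  have h1 : (⨆ γ : Γ, A.Vg γ) ≤ LinearMap.ker f :=
    iSup_le fun γ x hx => LinearMap.mem_ker.mpr (h γ x hx)
  have h2 : u ∈ (⨆ γ : Γ, A.Vg γ) := by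
    rw [A.internal.submodule_iSup_eq_top]; exact Submodule.mem_top
  exact LinearMap.mem_ker.mp (h1 h2)

/-- `Y^M_m(u, Y^M_{-2}(v,w)) ∈ C₂(M)` for `m ≤ 0`, all `u v`. -/
lemma qE (m : ℤ) (hm : m ≤ 0) (u v : V) (w : M) :
    (Submodule.Quotient.mk (B.YM m u (B.YM (-2) v w)) : M ⧸ C2M B) = 0 := by
  have step1 : ∀ γ1 : Γ, ∀ u ∈ A.Vg γ1, ∀ v : V,
      (Submodule.Quotient.mk (B.YM m u (B.YM (-2) v w)) : M ⧸ C2M B) = 0 := by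
    intro γ1 u hu v
    have hf := homog_ext (f := (C2M B).mkQ ∘ₗ (B.YM m u) ∘ₗ ((B.YM (-2)).flip w))
      (fun γ2 v hv => by
        simp only [LinearMap.comp_apply, LinearMap.flip_apply, Submodule.mkQ_apply]
        exact qEhom B m hm γ1 γ2 u v w hu hv) v
    simpa only [LinearMap.comp_apply, LinearMap.flip_apply, Submodule.mkQ_apply] using hf
  have hf := homog_ext (f := (C2M B).mkQ ∘ₗ ((B.YM m).flip (B.YM (-2) v w)))
      (fun γ1 u hu => by
        simp only [LinearMap.comp_apply, LinearMap.flip_apply, Submodule.mkQ_apply]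
        exact step1 γ1 u hu v) u
  simpa only [LinearMap.comp_apply, LinearMap.flip_apply, Submodule.mkQ_apply] using hf

/-- `Y^M_n(Y_{-2}(u,v), w) ∈ C₂(M)` for `n ≤ 0`, all `u v`. -/
lemma qF (n : ℤ) (hn : n ≤ 0) (u v : V) (w : M) :
    (Submodule.Quotient.mk (B.YM n (A.Y (-2) u v) w) : M ⧸ C2M B) = 0 := by
  have step1 : ∀ γ1 : Γ, ∀ u ∈ A.Vg γ1, ∀ v : V,
      (Submodule.Quotient.mk (B.YM n (A.Y (-2) u v) w) : M ⧸ C2M B) = 0 := by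
    intro γ1 u hu v
    have hf := homog_ext (f := (C2M B).mkQ ∘ₗ ((B.YM n).flip w) ∘ₗ (A.Y (-2) u))
      (fun γ2 v hv => by
        simp only [LinearMap.comp_apply, LinearMap.flip_apply, Submodule.mkQ_apply]
        exact qFhom B n hn γ1 γ2 u v w hu hv) v
    simpa only [LinearMap.comp_apply, LinearMap.flip_apply, Submodule.mkQ_apply] using hf
  have hf := homog_ext (f := (C2M B).mkQ ∘ₗ ((B.YM n).flip w) ∘ₗ ((A.Y (-2)).flip v))
      (fun γ1 u hu => by
        simp only [LinearMap.comp_apply, LinearMap.flip_apply, Submodule.mkQ_apply]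
        exact step1 γ1 u hu v) u
  simpa only [LinearMap.comp_apply, LinearMap.flip_apply, Submodule.mkQ_apply] using hf

/-- associativity mod `C₂(M)`, all `u v`. -/
lemma qD (u v : V) (w : M) :
    (Submodule.Quotient.mk (B.YM (-1) u (B.YM (-1) v w)) : M ⧸ C2M B)
    = Submodule.Quotient.mk (B.YM (-1) (A.Y (-1) u v) w) := by
  have step1 : ∀ γ1 : Γ, ∀ u ∈ A.Vg γ1, ∀ v : V,
      (Submodule.Quotient.mk (B.YM (-1) u (B.YM (-1) v w)) : M ⧸ C2M B)
        = Submodule.Quotient.mk (B.YM (-1) (A.Y (-1) u v) w) := by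
    intro γ1 u hu v
    have hf := homog_ext
      (f := (C2M B).mkQ ∘ₗ ((B.YM (-1) u) ∘ₗ ((B.YM (-1)).flip w))
        - (C2M B).mkQ ∘ₗ (((B.YM (-1)).flip w) ∘ₗ (A.Y (-1) u)))
      (fun γ2 v hv => by
        simp only [LinearMap.sub_apply, LinearMap.comp_apply, LinearMap.flip_apply,
          Submodule.mkQ_apply, sub_eq_zero]
        exact qDhom B γ1 γ2 u v w hu hv) v
    simpa only [LinearMap.sub_apply, LinearMap.comp_apply, LinearMap.flip_apply,
      Submodule.mkQ_apply, sub_eq_zero] using hf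
  have hf := homog_ext
      (f := (C2M B).mkQ ∘ₗ ((B.YM (-1)).flip (B.YM (-1) v w))
        - (C2M B).mkQ ∘ₗ (((B.YM (-1)).flip w) ∘ₗ ((A.Y (-1)).flip v)))
      (fun γ1 u hu => by
        simp only [LinearMap.sub_apply, LinearMap.comp_apply, LinearMap.flip_apply,
          Submodule.mkQ_apply, sub_eq_zero]
        exact step1 γ1 u hu v) u
  simpa only [LinearMap.sub_apply, LinearMap.comp_apply, LinearMap.flip_apply,
    Submodule.mkQ_apply, sub_eq_zero] using hf

/-- A vertex algebra is a module over itself. -/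
def selfMod (A' : VA k Γ γ0 β V) : VMod A' V where
  Mg := A'.Vg
  internal := A'.internal
  YM := A'.Y
  grading := A'.grading
  vacuum := A'.vacuum_left
  vacuum' := A'.vacuum_left'
  truncation := A'.truncation
  jacobi := A'.jacobi
  DM := (A'.Y (-2)).flip A'.vac
  derivM1 := fun n v w => by
    simpa only [LinearMap.flip_apply] using A'.deriv1 n v w
  derivM2 := A'.deriv2

lemma C2M_selfMod (A' : VA k Γ γ0 β V) : C2M (selfMod A') = C2 A' := rfl

/-- stability of `C₂(M)` under `Y^M_n(c, ·)`, `c ∈ C₂(V)`, `n ≤ 0`. -/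
lemma stab1 (n : ℤ) (hn : n ≤ 0) (c : V) (hc : c ∈ C2 A) (w : M) :
    B.YM n c w ∈ C2M B := by
  have hgen : {x : V | ∃ u v : V, A.Y (-2) u v = x} ⊆
      (Submodule.comap ((B.YM n).flip w) (C2M B) : Set V) := by
    rintro x ⟨a, b, rfl⟩
    simp only [SetLike.mem_coe, Submodule.mem_comap, LinearMap.flip_apply]
    rw [← Submodule.Quotient.mk_eq_zero]
    exact qF B n hn a b w
  have := (Submodule.span_le.mpr hgen) hc
  simpa only [Submodule.mem_comap, LinearMap.flip_apply] using this

/-- stability of `C₂(M)` under `Y^M_n(v, ·)` in the second argument, `n ≤ 0`. -/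
lemma stab2 (n : ℤ) (hn : n ≤ 0) (v : V) (x : M) (hx : x ∈ C2M B) :
    B.YM n v x ∈ C2M B := by
  have hgen : {y : M | ∃ (a : V) (b : M), B.YM (-2) a b = y} ⊆
      (Submodule.comap (B.YM n v) (C2M B) : Set M) := by
    rintro y ⟨a, b, rfl⟩
    simp only [SetLike.mem_coe, Submodule.mem_comap]
    rw [← Submodule.Quotient.mk_eq_zero]
    exact qE B n hn v a b
  have := (Submodule.span_le.mpr hgen) hx
  simpa only [Submodule.mem_comap] using this

lemma stabV1 (n : ℤ) (hn : n ≤ 0) (c : V) (hc : c ∈ C2 A) (v : V) :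
    A.Y n c v ∈ C2 A :=
  stab1 (selfMod A) n hn c hc v

lemma stabV2 (n : ℤ) (hn : n ≤ 0) (u : V) (x : V) (hx : x ∈ C2 A) :
    A.Y n u x ∈ C2 A :=
  stab2 (selfMod A) n hn u x hx

/-- Lift of a bilinear map to quotients. -/
noncomputable def liftBil {k X Y Z : Type*} [Field k] [AddCommGroup X] [Module k X]
    [AddCommGroup Y] [Module k Y] [AddCommGroup Z] [Module k Z]
    (p : Submodule k X) (s : Submodule k Y) (r : Submodule k Z)
    (f : X →ₗ[k] Y →ₗ[k] Z) : X ⧸ p → Y ⧸ s → Z ⧸ r :=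
  fun a b => Submodule.Quotient.mk (f (Quotient.out a) (Quotient.out b))

lemma liftBil_mk {k X Y Z : Type*} [Field k] [AddCommGroup X] [Module k X]
    [AddCommGroup Y] [Module k Y] [AddCommGroup Z] [Module k Z]
    (p : Submodule k X) (s : Submodule k Y) (r : Submodule k Z)
    (f : X →ₗ[k] Y →ₗ[k] Z)
    (h1 : ∀ x ∈ p, ∀ y, f x y ∈ r) (h2 : ∀ x, ∀ y ∈ s, f x y ∈ r)
    (x : X) (y : Y) :
    liftBil p s r f (Submodule.Quotient.mk x) (Submodule.Quotient.mk y)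
      = Submodule.Quotient.mk (f x y) := by
  set a := Quotient.out (Submodule.Quotient.mk x : X ⧸ p) with ha
  set b := Quotient.out (Submodule.Quotient.mk y : Y ⧸ s) with hb
  have hax : (Submodule.Quotient.mk a : X ⧸ p) = Submodule.Quotient.mk x :=
    Quotient.out_eq' _
  have hby : (Submodule.Quotient.mk b : Y ⧸ s) = Submodule.Quotient.mk y :=
    Quotient.out_eq' _
  have h1' : a - x ∈ p := (Submodule.Quotient.eq p).mp hax
  have h2' : b - y ∈ s := (Submodule.Quotient.eq s).mp hby
  show Submodule.Quotient.mk (f a b) = Submodule.Quotient.mk (f x y)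
  rw [Submodule.Quotient.eq]
  have hsplit : f a b - f x y = f (a - x) b + f x (b - y) := by
    simp only [map_sub, LinearMap.sub_apply]
    abel
  rw [hsplit]
  exact add_mem (h1 _ h1' _) (h2 _ _ h2')

end Aux

/-- for a `(G_Γ, β, γ0)`-vertex algebra `V` and a
`(G_Γ, β, γ0)`-left `V`-module `M`, assuming
`β(γ1,γ2)·β(γ1,γ3) = β(γ1,γ2+γ3)`:
(i) `Y^M_0(u, Y^M_{-1}(v,w)) - Y^M_{-1}(Y_0(u,v), w)
     - β(γ1,γ2) • Y^M_{-1}(v, Y^M_0(u,w)) ∈ C₂(M)`;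
(ii) `Y^M_0(Y_{-1}(u,v), w) - Y^M_{-1}(u, Y^M_0(v,w))
     - β(γ1,γ2) • Y^M_{-1}(v, Y^M_0(u,w)) ∈ C₂(M)`.
Consequently `R(M) = M/C₂(M)`, with action induced by `Y^M_{-1}` and bracket
induced by `Y^M_0`, is a `(G_Γ, β)`-left Poisson module for the
`β`-commutative `(G_Γ, β)`-Poisson algebra `R(V) = V/C₂(V)` of degree `0`. -/
theorem statement16 {k Γ V M : Type*} [Field k] [CharZero k] [AddCommGroup Γ]
    [DecidableEq Γ] [AddCommGroup V] [Module k V] [AddCommGroup M] [Module k M]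
    (γ0 : Γ) (β : Γ → Γ → k) (A : VA k Γ γ0 β V) (B : VMod A M)
    (hβmul : ∀ γ1 γ2 γ3 : Γ, β γ1 γ2 * β γ1 γ3 = β γ1 (γ2 + γ3)) :
    (∀ (γ1 γ2 : Γ) (u v : V) (w : M), u ∈ A.Vg γ1 → v ∈ A.Vg γ2 →
      B.YM 0 u (B.YM (-1) v w) - B.YM (-1) (A.Y 0 u v) w
        - β γ1 γ2 • B.YM (-1) v (B.YM 0 u w) ∈ C2M B) ∧
    (∀ (γ1 γ2 : Γ) (u v : V) (w : M), u ∈ A.Vg γ1 → v ∈ A.Vg γ2 →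
      B.YM 0 (A.Y (-1) u v) w - B.YM (-1) u (B.YM 0 v w)
        - β γ1 γ2 • B.YM (-1) v (B.YM 0 u w) ∈ C2M B) ∧
    (∃ (π π0 : (V ⧸ C2 A) → (V ⧸ C2 A) → (V ⧸ C2 A))
       (πM π0M : (V ⧸ C2 A) → (M ⧸ C2M B) → (M ⧸ C2M B)),
      (∀ u v : V, π (Submodule.Quotient.mk u) (Submodule.Quotient.mk v)
          = Submodule.Quotient.mk (A.Y (-1) u v)) ∧
      (∀ u v : V, π0 (Submodule.Quotient.mk u) (Submodule.Quotient.mk v)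
          = Submodule.Quotient.mk (A.Y 0 u v)) ∧
      (∀ (v : V) (w : M),
        πM (Submodule.Quotient.mk v) (Submodule.Quotient.mk w)
          = Submodule.Quotient.mk (B.YM (-1) v w)) ∧
      (∀ (v : V) (w : M),
        π0M (Submodule.Quotient.mk v) (Submodule.Quotient.mk w)
          = Submodule.Quotient.mk (B.YM 0 v w)) ∧
      -- `R(M)` is a left module for the algebra `R(V)`
      (∀ (a b : V ⧸ C2 A) (m : M ⧸ C2M B), πM (π a b) m = πM a (πM b m)) ∧
      (∀ m : M ⧸ C2M B, πM (Submodule.Quotient.mk A.vac) m = m) ∧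
      -- `R(M)` is a left Lie module for the Lie bracket of `R(V)`
      (∀ (γ1 γ2 : Γ) (u v : V), u ∈ A.Vg γ1 → v ∈ A.Vg γ2 →
        ∀ m : M ⧸ C2M B,
        π0M (π0 (Submodule.Quotient.mk u) (Submodule.Quotient.mk v)) m
          = π0M (Submodule.Quotient.mk u) (π0M (Submodule.Quotient.mk v) m)
            - β γ1 γ2 •
                π0M (Submodule.Quotient.mk v)
                  (π0M (Submodule.Quotient.mk u) m)) ∧
      -- Poisson module compatibility (3)
      (∀ (γ1 γ2 : Γ) (u v : V), u ∈ A.Vg γ1 → v ∈ A.Vg γ2 →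
        ∀ m : M ⧸ C2M B,
        π0M (Submodule.Quotient.mk u) (πM (Submodule.Quotient.mk v) m)
          = πM (π0 (Submodule.Quotient.mk u) (Submodule.Quotient.mk v)) m
            + β γ1 γ2 •
                πM (Submodule.Quotient.mk v)
                  (π0M (Submodule.Quotient.mk u) m)) ∧
      -- Poisson module compatibility (4)
      (∀ (γ1 γ2 : Γ) (u v : V), u ∈ A.Vg γ1 → v ∈ A.Vg γ2 →
        ∀ m : M ⧸ C2M B,
        π0M (π (Submodule.Quotient.mk u) (Submodule.Quotient.mk v)) m
          = πM (Submodule.Quotient.mk u) (π0M (Submodule.Quotient.mk v) m)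
            + β γ1 γ2 •
                πM (Submodule.Quotient.mk v)
                  (π0M (Submodule.Quotient.mk u) m)))  := by
  classical
  have hπeq : ∀ u v : V,
      liftBil (C2 A) (C2 A) (C2 A) (A.Y (-1)) (Submodule.Quotient.mk u)
        (Submodule.Quotient.mk v) = Submodule.Quotient.mk (A.Y (-1) u v) :=
    fun u v => liftBil_mk _ _ _ _
      (fun c hc y => stabV1 (-1) (by norm_num) c hc y)
      (fun x y hy => stabV2 (-1) (by norm_num) x y hy) u v
  have hπ0eq : ∀ u v : V,
      liftBil (C2 A) (C2 A) (C2 A) (A.Y 0) (Submodule.Quotient.mk u)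
        (Submodule.Quotient.mk v) = Submodule.Quotient.mk (A.Y 0 u v) :=
    fun u v => liftBil_mk _ _ _ _
      (fun c hc y => stabV1 0 le_rfl c hc y)
      (fun x y hy => stabV2 0 le_rfl x y hy) u v
  have hπMeq : ∀ (v : V) (w : M),
      liftBil (C2 A) (C2M B) (C2M B) (B.YM (-1)) (Submodule.Quotient.mk v)
        (Submodule.Quotient.mk w) = Submodule.Quotient.mk (B.YM (-1) v w) :=
    fun v w => liftBil_mk _ _ _ _
      (fun c hc y => stab1 B (-1) (by norm_num) c hc y)
      (fun x y hy => stab2 B (-1) (by norm_num) x y hy) v w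
  have hπ0Meq : ∀ (v : V) (w : M),
      liftBil (C2 A) (C2M B) (C2M B) (B.YM 0) (Submodule.Quotient.mk v)
        (Submodule.Quotient.mk w) = Submodule.Quotient.mk (B.YM 0 v w) :=
    fun v w => liftBil_mk _ _ _ _
      (fun c hc y => stab1 B 0 le_rfl c hc y)
      (fun x y hy => stab2 B 0 le_rfl x y hy) v w
  refine ⟨?_, ?_, ?_⟩
  · intro γ1 γ2 u v w hu hv
    rw [← Submodule.Quotient.mk_eq_zero, Submodule.Quotient.mk_sub,
      Submodule.Quotient.mk_sub, Submodule.Quotient.mk_smul]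
    rw [sub_right_comm, qJ00 B (-1) γ1 γ2 u v w hu hv, sub_self]
  · intro γ1 γ2 u v w hu hv
    rw [← Submodule.Quotient.mk_eq_zero, Submodule.Quotient.mk_sub,
      Submodule.Quotient.mk_sub, Submodule.Quotient.mk_smul]
    rw [← qChom B γ1 γ2 u v w hu hv]
    abel
  · refine ⟨liftBil (C2 A) (C2 A) (C2 A) (A.Y (-1)),
      liftBil (C2 A) (C2 A) (C2 A) (A.Y 0),
      liftBil (C2 A) (C2M B) (C2M B) (B.YM (-1)),
      liftBil (C2 A) (C2M B) (C2M B) (B.YM 0),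
      hπeq, hπ0eq, hπMeq, hπ0Meq, ?_, ?_, ?_, ?_, ?_⟩
    · intro a b m
      obtain ⟨u, rfl⟩ := Submodule.Quotient.mk_surjective _ a
      obtain ⟨v, rfl⟩ := Submodule.Quotient.mk_surjective _ b
      obtain ⟨w, rfl⟩ := Submodule.Quotient.mk_surjective _ m
      rw [hπeq, hπMeq, hπMeq, hπMeq]
      exact (qD B u v w).symm
    · intro m
      obtain ⟨w, rfl⟩ := Submodule.Quotient.mk_surjective _ m
      rw [hπMeq]
      exact congrArg Submodule.Quotient.mk (B.vacuum w)
    · intro γ1 γ2 u v hu hv m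
      obtain ⟨w, rfl⟩ := Submodule.Quotient.mk_surjective _ m
      rw [hπ0eq, hπ0Meq, hπ0Meq, hπ0Meq, hπ0Meq, hπ0Meq]
      exact (qJ00 B 0 γ1 γ2 u v w hu hv).symm
    · intro γ1 γ2 u v hu hv m
      obtain ⟨w, rfl⟩ := Submodule.Quotient.mk_surjective _ m
      rw [hπ0eq, hπMeq, hπ0Meq, hπMeq, hπ0Meq, hπMeq]
      rw [← qJ00 B (-1) γ1 γ2 u v w hu hv, sub_add_cancel]
    · intro γ1 γ2 u v hu hv m
      obtain ⟨w, rfl⟩ := Submodule.Quotient.mk_surjective _ m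
      rw [hπeq, hπ0Meq, hπ0Meq, hπMeq, hπ0Meq, hπMeq]
      exact (qChom B γ1 γ2 u v w hu hv).symm
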